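/- There exists an absolute constant C > 0 such that for every prime p and every integer r with 0 < r < 2√p, one has H(r² − 4p) ≤ C·√(4p − r²)·(log 4p)². -/

import Mathlib

open scoped Classical

/-- `L(1,χ_d) = lim_{N→∞} Σ_{n=1}^N (d/n)/n`, with `(d/n)` the Jacobi symbol. -/
noncomputable def Lchi (d : ℤ) : ℝ :=
  Filter.limUnder Filter.atTop (fun N : ℕ => ∑ n ∈ Finset.Icc 1 N, (jacobiSym d n : ℝ) / n)

/-- The Kronecker class number `H(D) = (1/π) Σ_{D = d f², d ≡ 0,1 mod 4} √|d| L(1,χ_d)`. -/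
noncomputable def KH (D : ℤ) : ℝ :=
  (1 / Real.pi) * ∑ f ∈ Finset.Icc 1 D.natAbs,
    if (f : ℤ) ^ 2 ∣ D ∧ (D / (f : ℤ) ^ 2 % 4 = 0 ∨ D / (f : ℤ) ^ 2 % 4 = 1) then
      Real.sqrt (D / (f : ℤ) ^ 2).natAbs * Lchi (D / (f : ℤ) ^ 2)
    else 0

open Finset Filter Topology

namespace KHproof


lemma q_ge_three {d : ℤ} (hd : d < 0) (h4 : d % 4 = 0 ∨ d % 4 = 1) : 3 ≤ d.natAbs := by
  rcases h4 with h | h <;> omega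

lemma jac_b {d : ℤ} (hd : d < 0) (hq3 : 3 ≤ d.natAbs) :
    jacobiSym d (8 * d.natAbs - 1) = -1 := by
  set q := d.natAbs with hq
  set m := 8 * q - 1 with hm
  have hm2 : m % 2 = 1 := by omega
  have hmodd : Odd m := Nat.odd_iff.mpr hm2
  have hm4 : m % 4 = 3 := by omega
  have hm8 : m % 8 = 7 := by omega
  have hdq : d = -(q : ℤ) := by omega
  obtain ⟨a, v, hv2, hqa⟩ :=
    Nat.exists_eq_pow_mul_and_not_dvd (show q ≠ 0 by omega) 2 (by norm_num)
  have hvodd : Odd v := Nat.odd_iff.mpr (Nat.two_dvd_ne_zero.mp hv2)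
  have hvq : v ∣ q := ⟨2 ^ a, by rw [hqa]; ring⟩
  have h1 : jacobiSym d m = jacobiSym (-1) m * jacobiSym (q : ℤ) m := by
    rw [hdq, show (-(q:ℤ)) = -1 * q by ring, jacobiSym.mul_left]
  have hneg : jacobiSym (-1) m = -1 := by
    rw [jacobiSym.at_neg_one hmodd, ZMod.χ₄_nat_eq_if_mod_four]
    simp [hm2, hm4]
  have h2 : jacobiSym (2 : ℤ) m = 1 := by
    rw [jacobiSym.at_two hmodd, ZMod.χ₈_nat_eq_if_mod_eight]
    simp [hm2, hm8]
  have hmv : jacobiSym (m : ℤ) v = ZMod.χ₄ v := by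
    have hdvd : (v : ℤ) ∣ (-1) - (m : ℤ) := by
      obtain ⟨c, hc⟩ := hvq
      refine ⟨-(8 * c), ?_⟩
      have : (m : ℤ) + 1 = 8 * q := by push_cast; omega
      rw [show (-1 : ℤ) - m = -((m:ℤ)+1) by ring, this, hc]
      push_cast; ring
    have h5 := Int.ModEq.symm ((Int.modEq_iff_dvd).mpr hdvd)
    rw [← jacobiSym.mod_left' h5, jacobiSym.at_neg_one hvodd]
  have h3 : jacobiSym (v : ℤ) m = 1 := by
    rcases Nat.odd_mod_four_iff.mp (Nat.odd_iff.mp hvodd) with hv1 | hv3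
    · rw [jacobiSym.quadratic_reciprocity_one_mod_four hv1 hmodd, hmv,
        ZMod.χ₄_nat_eq_if_mod_four]
      simp [hv1, Nat.odd_iff.mp hvodd]
    · rw [jacobiSym.quadratic_reciprocity_three_mod_four hv3 hm4, hmv,
        ZMod.χ₄_nat_eq_if_mod_four]
      simp [hv3, Nat.odd_iff.mp hvodd]
  have h4' : jacobiSym (q : ℤ) m = 1 := by
    rw [hqa]
    push_cast
    rw [jacobiSym.mul_left, jacobiSym.pow_left, h2, h3, one_pow, one_mul]
  rw [h1, hneg, h4', mul_one]




variable {d : ℤ}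

/-- the Jacobi symbol restricted to odd arguments -/
noncomputable def hfun (d : ℤ) (n : ℕ) : ℤ := if n % 2 = 1 then jacobiSym d n else 0

lemma hfun_abs_le (d : ℤ) (n : ℕ) : |hfun d n| ≤ 1 := by
  unfold hfun
  split
  · rcases jacobiSym.trichotomy d n with h | h | h <;> rw [h] <;> norm_num
  · norm_num

lemma hfun_period (d : ℤ) (n : ℕ) : hfun d (n + 8 * d.natAbs) = hfun d n := by
  unfold hfun
  have hpar : (n + 8 * d.natAbs) % 2 = n % 2 := by omega
  rw [hpar]
  split
  · rename_i hodd
    have h1 : Odd n := Nat.odd_iff.mpr hodd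
    have h2 : Odd (n + 8 * d.natAbs) := by rw [Nat.odd_iff]; omega
    rw [jacobiSym.mod_right d h1, jacobiSym.mod_right d h2,
      show n + 8 * d.natAbs = n + 2 * (4 * d.natAbs) by ring, Nat.add_mul_mod_self_right]
  · rfl

lemma hfun_neg {q : ℕ} (hq : q = d.natAbs) (hq3 : 3 ≤ q) (hb : jacobiSym d (8 * q - 1) = -1)
    {m : ℕ} (h1 : 1 ≤ m) (h2 : m ≤ 8 * q - 1) : hfun d (8 * q - m) = - hfun d m := by
  unfold hfun
  rcases Nat.even_or_odd m with he | ho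
  · have hm2 : ¬ (m % 2 = 1) := by rw [Nat.even_iff] at he; omega
    have hs2 : ¬ ((8 * q - m) % 2 = 1) := by rw [Nat.even_iff] at he; omega
    simp [hm2, hs2]
  · have hm2 : m % 2 = 1 := Nat.odd_iff.mp ho
    have hs2 : (8 * q - m) % 2 = 1 := by omega
    simp only [hm2, hs2, if_pos]
    have hdvd : ((4 * q : ℕ) : ℤ) ∣ ((m * (8 * q - 1) : ℕ) : ℤ) - ((8 * q - m : ℕ) : ℤ) := by
      refine ⟨2 * ((m : ℤ) - 1), ?_⟩
      push_cast [h1, show m ≤ 8 * q by omega, show 1 ≤ 8 * q by omega]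
      ring
    have hmodeq : (8 * q - m) % (4 * d.natAbs) = (m * (8 * q - 1)) % (4 * d.natAbs) := by
      rw [← hq]
      exact (Nat.modEq_iff_dvd).mpr hdvd
    have hodd1 : Odd (8 * q - m) := Nat.odd_iff.mpr hs2
    have hodd2 : Odd (m * (8 * q - 1)) := by
      rw [Nat.odd_mul]
      exact ⟨ho, Nat.odd_iff.mpr (by omega)⟩
    calc jacobiSym d (8 * q - m)
        = jacobiSym d ((8 * q - m) % (4 * d.natAbs)) := jacobiSym.mod_right d hodd1
      _ = jacobiSym d ((m * (8 * q - 1)) % (4 * d.natAbs)) := by rw [hmodeq]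
      _ = jacobiSym d (m * (8 * q - 1)) := (jacobiSym.mod_right d hodd2).symm
      _ = jacobiSym d m * jacobiSym d (8 * q - 1) := by
          rw [jacobiSym.mul_right' d (by omega) (by omega)]
      _ = - jacobiSym d m := by rw [hb]; ring

/-- the sum of `hfun` over any window of length `8 q` vanishes -/
lemma window_zero {q : ℕ} (hq : q = d.natAbs) (hq3 : 3 ≤ q)
    (hb : jacobiSym d (8 * q - 1) = -1) (a : ℕ) :
    ∑ n ∈ Ioc a (a + 8 * q), hfun d n = 0 := by
  induction a with
  | zero =>
    simp only [Nat.zero_add]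
    have h8 : 8 * q = (8 * q - 1) + 1 := by omega
    rw [h8, Finset.sum_Ioc_succ_top (by omega)]
    have hz : hfun d ((8 * q - 1) + 1) = 0 := by
      unfold hfun
      rw [if_neg (by omega)]
    rw [hz, add_zero]
    have hU : ∑ n ∈ Ioc 0 (8 * q - 1), hfun d n
        = ∑ n ∈ Ioc 0 (8 * q - 1), (- hfun d n) := by
      refine Finset.sum_nbij' (fun n => 8 * q - n) (fun n => 8 * q - n) ?_ ?_ ?_ ?_ ?_
      · intro n hn; simp only [Finset.mem_Ioc] at *; omega
      · intro n hn; simp only [Finset.mem_Ioc] at *; omega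
      · intro n hn; simp only [Finset.mem_Ioc] at hn
        show 8 * q - (8 * q - n) = n; omega
      · intro n hn; simp only [Finset.mem_Ioc] at hn
        show 8 * q - (8 * q - n) = n; omega
      · intro n hn
        simp only [Finset.mem_Ioc] at hn
        rw [hfun_neg hq hq3 hb (by omega) (by omega), neg_neg]
    have := hU
    rw [Finset.sum_neg_distrib] at this
    linarith [this]
  | succ a ih =>
    have key : ∑ n ∈ Ioc a (a + 1), hfun d n + ∑ n ∈ Ioc (a + 1) (a + 1 + 8 * q), hfun d n
        = ∑ n ∈ Ioc a (a + 8 * q), hfun d n + ∑ n ∈ Ioc (a + 8 * q) (a + 1 + 8 * q), hfun d n := by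
      rw [Finset.sum_Ioc_consecutive _ (by omega) (by omega),
        Finset.sum_Ioc_consecutive _ (by omega) (by omega)]
    have h1 : ∑ n ∈ Ioc a (a + 1), hfun d n = hfun d (a + 1) := by
      rw [Nat.Ioc_succ_singleton, Finset.sum_singleton]
    have h2 : ∑ n ∈ Ioc (a + 8 * q) (a + 1 + 8 * q), hfun d n = hfun d (a + 1) := by
      rw [show a + 1 + 8 * q = (a + 8 * q) + 1 by ring, Nat.Ioc_succ_singleton,
        Finset.sum_singleton, show a + 8 * q + 1 = (a + 1) + 8 * q by ring]
      rw [hq] at *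
      exact hfun_period d (a + 1)
    rw [h1, h2, ih] at key
    linarith [key]




variable {d : ℤ}


/-- partial sums of hfun are bounded by the period -/
lemma T_bound {q : ℕ} (hq : q = d.natAbs) (hq3 : 3 ≤ q)
    (hb : jacobiSym d (8 * q - 1) = -1) (M : ℕ) :
    |∑ n ∈ Ioc 0 M, hfun d n| ≤ (8 * q : ℤ) := by
  induction M using Nat.strong_induction_on with
  | _ M ih =>
    by_cases hM : M ≤ 8 * q
    · calc |∑ n ∈ Ioc 0 M, hfun d n| ≤ ∑ n ∈ Ioc 0 M, |hfun d n| :=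
            Finset.abs_sum_le_sum_abs _ _
        _ ≤ ∑ _n ∈ Ioc 0 M, (1 : ℤ) := Finset.sum_le_sum (fun n _ => hfun_abs_le d n)
        _ = M := by simp
        _ ≤ (8 * q : ℤ) := by exact_mod_cast hM
    · push_neg at hM
      have hsplit : ∑ n ∈ Ioc 0 (M - 8 * q), hfun d n + ∑ n ∈ Ioc (M - 8 * q) M, hfun d n
          = ∑ n ∈ Ioc 0 M, hfun d n :=
        Finset.sum_Ioc_consecutive _ (by omega) (by omega)
      have hw : ∑ n ∈ Ioc (M - 8 * q) M, hfun d n = 0 := by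
        have := window_zero hq hq3 hb (M - 8 * q)
        rwa [show M - 8 * q + 8 * q = M by omega] at this
      rw [← hsplit, hw, add_zero]
      exact ih (M - 8 * q) (by omega)

/-- full partial sums of the Jacobi symbol -/
lemma S_bound (hd : d < 0) (h4 : d % 4 = 0 ∨ d % 4 = 1)
    {q : ℕ} (hq : q = d.natAbs) (hq3 : 3 ≤ q)
    (hb : jacobiSym d (8 * q - 1) = -1) (N : ℕ) :
    |∑ n ∈ Ioc 0 N, jacobiSym d n| ≤ (8 * q : ℤ) * (1 + (Nat.log 2 N : ℤ)) := by
  have hq8 : (0:ℤ) ≤ 8 * q := by positivity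
  rcases Int.even_or_odd d with hde | hdo
  · -- d even : jacobiSym d n = hfun d n on Ioc 0 N
    have heq : ∀ n ∈ Ioc 0 N, jacobiSym d n = hfun d n := by
      intro n hn
      simp only [Finset.mem_Ioc] at hn
      unfold hfun
      rcases Nat.even_or_odd n with hne | hno
      · rw [if_neg (by rw [Nat.even_iff] at hne; omega)]
        refine jacobiSym.eq_zero_iff.mpr ⟨by omega, ?_⟩
        intro hgcd
        have h2d : (2:ℤ) ∣ d := hde.two_dvd
        have h2n : (2:ℕ) ∣ n := hne.two_dvd
        have : (2:ℕ) ∣ Int.gcd d n := Nat.dvd_gcd (Int.natAbs_dvd_natAbs.mpr h2d)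
          (by exact_mod_cast h2n)
        omega
      · rw [if_pos (Nat.odd_iff.mp hno)]
    rw [Finset.sum_congr rfl heq]
    calc |∑ n ∈ Ioc 0 N, hfun d n| ≤ (8 * q : ℤ) := T_bound hq hq3 hb N
      _ ≤ (8 * q : ℤ) * (1 + (Nat.log 2 N : ℤ)) := by
        nlinarith [Int.ofNat_nonneg (Nat.log 2 N)]
  · -- d odd
    induction N using Nat.strong_induction_on with
    | _ N ih =>
      by_cases hN1 : N ≤ 1
      · interval_cases N
        · simp
        · have : ∑ n ∈ Ioc 0 1, jacobiSym d n = 1 := by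
            rw [show (1:ℕ) = 0 + 1 by rfl, Nat.Ioc_succ_singleton, Finset.sum_singleton,
              jacobiSym.one_right]
          rw [this]
          calc |(1:ℤ)| = 1 := by norm_num
            _ ≤ (8 * q : ℤ) * (1 + (Nat.log 2 1 : ℤ)) := by
              simp
              omega
      · push_neg at hN1
        -- split into odd and even part
        have hsplit : ∑ n ∈ Ioc 0 N, jacobiSym d n
            = ∑ n ∈ Ioc 0 N, hfun d n + ∑ m ∈ Ioc 0 (N / 2), jacobiSym d m := by
          have h1 : ∑ n ∈ Ioc 0 N, hfun d n
              = ∑ n ∈ (Ioc 0 N).filter (fun n => n % 2 = 1), jacobiSym d n := by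
            rw [Finset.sum_filter]
            rfl
          have h2 : ∑ n ∈ (Ioc 0 N).filter (fun n => ¬ n % 2 = 1), jacobiSym d n
              = ∑ m ∈ Ioc 0 (N / 2), jacobiSym d (2 * m) := by
            refine Finset.sum_nbij' (fun n => n / 2) (fun m => 2 * m) ?_ ?_ ?_ ?_ ?_
            · intro n hn
              simp only [Finset.mem_filter, Finset.mem_Ioc] at hn ⊢
              omega
            · intro m hm
              simp only [Finset.mem_filter, Finset.mem_Ioc] at hm ⊢
              omega
            · intro n hn
              simp only [Finset.mem_filter, Finset.mem_Ioc] at hn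
              show 2 * (n / 2) = n
              omega
            · intro m hm
              simp only [Finset.mem_Ioc] at hm
              show 2 * m / 2 = m
              omega
            · intro n hn
              simp only [Finset.mem_filter, Finset.mem_Ioc] at hn
              show jacobiSym d n = jacobiSym d (2 * (n / 2))
              congr 1
              omega
          have h4' : jacobiSym d 2 = 1 := by
            have hmod : d % ((2:ℕ):ℤ) = 1 := by
              have := Int.odd_iff.mp hdo
              push_cast
              omega
            rw [jacobiSym.mod_left, hmod, jacobiSym.one_left]
          have h3 : ∀ m, jacobiSym d (2 * m) = jacobiSym d 2 * jacobiSym d m := by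
            intro m
            rcases Nat.eq_zero_or_pos m with rfl | hm
            · simp [h4']
            · exact jacobiSym.mul_right' d (by norm_num) (by omega)
          rw [← Finset.sum_filter_add_sum_filter_not (Ioc 0 N) (fun n => n % 2 = 1), ← h1, h2]
          congr 1
          refine Finset.sum_congr rfl (fun m _ => ?_)
          rw [h3, h4', one_mul]
        rw [hsplit]
        have hlog : Nat.log 2 (N / 2) = Nat.log 2 N - 1 := Nat.log_div_base 2 N
        have hlogpos : 1 ≤ Nat.log 2 N := by
          have := Nat.log_pos (b := 2) (by norm_num) (by omega : 2 ≤ N)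
          omega
        calc |∑ n ∈ Ioc 0 N, hfun d n + ∑ m ∈ Ioc 0 (N / 2), jacobiSym d m|
            ≤ |∑ n ∈ Ioc 0 N, hfun d n| + |∑ m ∈ Ioc 0 (N / 2), jacobiSym d m| := abs_add_le _ _
          _ ≤ (8 * q : ℤ) + (8 * q : ℤ) * (1 + (Nat.log 2 (N / 2) : ℤ)) := by
              gcongr
              · exact T_bound hq hq3 hb N
              · exact ih (N / 2) (by omega)
          _ ≤ (8 * q : ℤ) * (1 + (Nat.log 2 N : ℤ)) := by
              rw [hlog]
              push_cast [hlogpos]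
              nlinarith [hq3]





lemma telescope (v : ℕ → ℝ) (a b : ℕ) (hab : a ≤ b) :
    ∑ i ∈ Ioc a b, (v i - v (i + 1)) = v (a + 1) - v (b + 1) := by
  induction b, hab using Nat.le_induction with
  | base => simp
  | succ b hab ih =>
    rw [Finset.sum_Ioc_succ_top (by omega), ih]
    ring

lemma tendsto_sqrt_atTop : Tendsto Real.sqrt atTop atTop := by
  refine tendsto_atTop_atTop_of_monotone (fun x y h => Real.sqrt_le_sqrt h) (fun b => ?_)
  exact ⟨b ^ 2, by rw [Real.sqrt_sq_eq_abs]; exact le_abs_self b⟩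

lemma ptwise {i : ℕ} (hi : 1 ≤ i) :
    (((i : ℝ))⁻¹ - (((i + 1 : ℕ)) : ℝ)⁻¹) * Real.sqrt i
      ≤ 3 / Real.sqrt i - 3 / Real.sqrt ((i + 1 : ℕ)) := by
  have hi1 : (1 : ℝ) ≤ (i : ℝ) := by exact_mod_cast hi
  push_cast
  set a := Real.sqrt i with ha
  set b := Real.sqrt ((i : ℝ) + 1) with hb
  have ha2 : a ^ 2 = i := Real.sq_sqrt (by positivity)
  have hb2 : b ^ 2 = (i : ℝ) + 1 := Real.sq_sqrt (by positivity)
  have ha0 : 0 < a := Real.sqrt_pos.mpr (by positivity)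
  have hb0 : 0 < b := Real.sqrt_pos.mpr (by positivity)
  have hab : a ≤ b := Real.sqrt_le_sqrt (by linarith)
  have h1 : ((i : ℝ))⁻¹ - ((i : ℝ) + 1)⁻¹ = 1 / (a ^ 2 * b ^ 2) := by
    rw [ha2, hb2]
    field_simp
    ring
  rw [h1]
  have h2 : 3 / a - 3 / b = 3 * (b - a) / (a * b) := by
    field_simp
  rw [h2, div_mul_eq_mul_div, div_le_div_iff₀ (by positivity) (by positivity)]
  have hkey : (b - a) * (b + a) = 1 := by nlinarith
  have h4 : (b - a) * (b + a) * (a ^ 2 * b) = a ^ 2 * b := by rw [hkey]; ring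
  have h5 : 0 ≤ (b - a) * (2 * b - a) * (a ^ 2 * b) := by
    apply mul_nonneg (mul_nonneg (by linarith) (by linarith))
    positivity
  nlinarith [h4, h5]

lemma abel_bound (g : ℕ → ℝ) (K : ℝ) (hK : 0 ≤ K)
    (hσ : ∀ k : ℕ, |∑ i ∈ range (k + 1), g i| ≤ K * Real.sqrt k)
    {M N : ℕ} (hM : 1 ≤ M) (hMN : M ≤ N) :
    |∑ n ∈ Ioc 0 N, g n / n - ∑ n ∈ Ioc 0 M, g n / n| ≤ 5 * K / Real.sqrt M := by
  have hM0 : (0 : ℝ) < M := by exact_mod_cast hM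
  have hsM : 0 < Real.sqrt M := Real.sqrt_pos.mpr hM0
  rcases eq_or_lt_of_le hMN with rfl | hlt
  · simp only [sub_self, abs_zero]
    positivity
  have hdiff : ∑ n ∈ Ioc 0 N, g n / n - ∑ n ∈ Ioc 0 M, g n / n = ∑ n ∈ Ioc M N, g n / n := by
    rw [← Finset.sum_Ioc_consecutive _ (Nat.zero_le M) hMN]
    ring
  rw [hdiff]
  have hsmul : ∑ n ∈ Ioc M N, g n / n = ∑ n ∈ Ioc M N, ((n : ℝ))⁻¹ • g n := by
    refine Finset.sum_congr rfl (fun n _ => ?_)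
    rw [smul_eq_mul]
    ring
  rw [hsmul, Finset.sum_Ioc_by_parts (fun i : ℕ => ((i : ℝ))⁻¹) g hlt]
  set G := fun k : ℕ => ∑ i ∈ range k, g i with hG
  have hGb : ∀ k : ℕ, |G (k + 1)| ≤ K * Real.sqrt k := fun k => hσ k
  have hsqle : Real.sqrt M ≤ Real.sqrt N := Real.sqrt_le_sqrt (by exact_mod_cast hMN)
  have hN0 : (0 : ℝ) < N := by
    have : (1 : ℕ) ≤ N := le_trans hM hMN
    exact_mod_cast this
  have hsN : 0 < Real.sqrt N := Real.sqrt_pos.mpr hN0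
  have hp1 : |((N : ℝ))⁻¹ • G (N + 1)| ≤ K / Real.sqrt M := by
    rw [smul_eq_mul, abs_mul, abs_inv, Nat.abs_cast]
    calc ((N : ℝ))⁻¹ * |G (N + 1)| ≤ ((N : ℝ))⁻¹ * (K * Real.sqrt N) := by
          gcongr
          exact hGb N
      _ = K * (Real.sqrt N / N) := by ring
      _ = K * (1 / Real.sqrt N) := by rw [Real.sqrt_div_self']
      _ = K / Real.sqrt N := by ring
      _ ≤ K / Real.sqrt M := by gcongr
  have hp2 : |(((M + 1 : ℕ)) : ℝ)⁻¹ • G (M + 1)| ≤ K / Real.sqrt M := by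
    rw [smul_eq_mul, abs_mul, abs_inv, Nat.abs_cast]
    have hM1 : (0 : ℝ) < ((M + 1 : ℕ) : ℝ) := by positivity
    calc (((M + 1 : ℕ) : ℝ))⁻¹ * |G (M + 1)| ≤ (((M + 1 : ℕ) : ℝ))⁻¹ * (K * Real.sqrt M) := by
          gcongr
          exact hGb M
      _ ≤ ((M : ℝ))⁻¹ * (K * Real.sqrt M) := by
          have hinv : (((M + 1 : ℕ)) : ℝ)⁻¹ ≤ ((M : ℝ))⁻¹ := by
            apply inv_anti₀ hM0
            push_cast
            linarith
          exact mul_le_mul_of_nonneg_right hinv (by positivity)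
      _ = K * (Real.sqrt M / M) := by ring
      _ = K * (1 / Real.sqrt M) := by rw [Real.sqrt_div_self']
      _ = K / Real.sqrt M := by ring
  have hmid : |∑ i ∈ Ioc M (N - 1), ((((i + 1 : ℕ)) : ℝ)⁻¹ - ((i : ℝ))⁻¹) • G (i + 1)|
      ≤ 3 * K / Real.sqrt M := by
    calc |∑ i ∈ Ioc M (N - 1), ((((i + 1 : ℕ)) : ℝ)⁻¹ - ((i : ℝ))⁻¹) • G (i + 1)|
        ≤ ∑ i ∈ Ioc M (N - 1), |((((i + 1 : ℕ)) : ℝ)⁻¹ - ((i : ℝ))⁻¹) • G (i + 1)| :=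
          Finset.abs_sum_le_sum_abs _ _
      _ ≤ ∑ i ∈ Ioc M (N - 1), K * (3 / Real.sqrt i - 3 / Real.sqrt ((i + 1 : ℕ))) := by
          refine Finset.sum_le_sum (fun i hi => ?_)
          simp only [Finset.mem_Ioc] at hi
          have hi1 : 1 ≤ i := le_trans hM (le_of_lt hi.1)
          have hii : (0:ℝ) < (i:ℝ) := by exact_mod_cast hi1
          rw [smul_eq_mul, abs_mul]
          have habs : |(((i + 1 : ℕ)) : ℝ)⁻¹ - ((i : ℝ))⁻¹| = ((i : ℝ))⁻¹ - (((i + 1 : ℕ)) : ℝ)⁻¹ := by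
            rw [abs_sub_comm, abs_of_nonneg]
            have : (((i + 1 : ℕ)) : ℝ)⁻¹ ≤ ((i : ℝ))⁻¹ := by
              apply inv_anti₀ hii
              push_cast
              linarith
            linarith
          rw [habs]
          calc (((i : ℝ))⁻¹ - (((i + 1 : ℕ)) : ℝ)⁻¹) * |G (i + 1)|
              ≤ (((i : ℝ))⁻¹ - (((i + 1 : ℕ)) : ℝ)⁻¹) * (K * Real.sqrt i) := by
                gcongr
                · have : (((i + 1 : ℕ)) : ℝ)⁻¹ ≤ ((i : ℝ))⁻¹ := by
                    apply inv_anti₀ hii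
                    push_cast
                    linarith
                  linarith
                · exact hGb i
            _ = K * ((((i : ℝ))⁻¹ - (((i + 1 : ℕ)) : ℝ)⁻¹) * Real.sqrt i) := by ring
            _ ≤ K * (3 / Real.sqrt i - 3 / Real.sqrt ((i + 1 : ℕ))) := by
                gcongr
                exact ptwise hi1
      _ = K * ∑ i ∈ Ioc M (N - 1), ((fun j : ℕ => 3 / Real.sqrt j) i
            - (fun j : ℕ => 3 / Real.sqrt j) (i + 1)) := by
          rw [Finset.mul_sum]
      _ = K * (3 / Real.sqrt ((M + 1 : ℕ)) - 3 / Real.sqrt (((N - 1) + 1 : ℕ))) := by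
          rw [telescope (fun j : ℕ => 3 / Real.sqrt j) M (N - 1) (by omega)]
      _ ≤ K * (3 / Real.sqrt M) := by
          have h1 : (0:ℝ) ≤ 3 / Real.sqrt (((N - 1) + 1 : ℕ)) := by positivity
          have h2 : 3 / Real.sqrt ((M + 1 : ℕ)) ≤ 3 / Real.sqrt M := by
            apply div_le_div_of_nonneg_left (by norm_num) hsM
            apply Real.sqrt_le_sqrt
            push_cast
            linarith
          nlinarith
      _ = 3 * K / Real.sqrt M := by ring
  calc |((N:ℝ))⁻¹ • G (N + 1) - (((M + 1 : ℕ)):ℝ)⁻¹ • G (M + 1)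
        - ∑ i ∈ Ioc M (N - 1), ((((i + 1 : ℕ)):ℝ)⁻¹ - ((i:ℝ))⁻¹) • G (i + 1)|
      ≤ |((N:ℝ))⁻¹ • G (N + 1) - (((M + 1 : ℕ)):ℝ)⁻¹ • G (M + 1)|
        + |∑ i ∈ Ioc M (N - 1), ((((i + 1 : ℕ)):ℝ)⁻¹ - ((i:ℝ))⁻¹) • G (i + 1)| := by
        exact abs_sub _ _
    _ ≤ |((N:ℝ))⁻¹ • G (N + 1)| + |(((M + 1 : ℕ)):ℝ)⁻¹ • G (M + 1)|
        + |∑ i ∈ Ioc M (N - 1), ((((i + 1 : ℕ)):ℝ)⁻¹ - ((i:ℝ))⁻¹) • G (i + 1)| := by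
        have := abs_sub (((N:ℝ))⁻¹ • G (N + 1)) ((((M + 1 : ℕ)):ℝ)⁻¹ • G (M + 1))
        linarith
    _ ≤ K / Real.sqrt M + K / Real.sqrt M + 3 * K / Real.sqrt M := by
        linarith [hp1, hp2, hmid]
    _ = 5 * K / Real.sqrt M := by ring





noncomputable def g (d : ℤ) (n : ℕ) : ℝ := if n = 0 then 0 else (jacobiSym d n : ℝ)

lemma sum_g (d : ℤ) (k : ℕ) :
    ∑ i ∈ range (k + 1), g d i = ∑ n ∈ Ioc 0 k, (jacobiSym d n : ℝ) := by
  rw [Finset.sum_range_succ']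
  have h0 : g d 0 = 0 := by simp [g]
  rw [h0, add_zero]
  have : Ioc 0 k = Ico 1 (k + 1) := by
    ext n
    simp only [Finset.mem_Ioc, Finset.mem_Ico]
    omega
  rw [this, Finset.sum_Ico_eq_sum_range]
  simp only [Nat.add_sub_cancel]
  refine Finset.sum_congr rfl (fun i _ => ?_)
  rw [show 1 + i = i + 1 from by omega]
  simp [g]

lemma log_nat_le (k : ℕ) (hk : 1 ≤ k) : 1 + (Nat.log 2 k : ℝ) ≤ 3 * Real.sqrt k := by
  have hk0 : (0:ℝ) < k := by exact_mod_cast hk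
  have hsk : 0 < Real.sqrt k := Real.sqrt_pos.mpr hk0
  have h1 : (Nat.log 2 k : ℝ) * Real.log 2 ≤ Real.log k := by
    have hpow : (2:ℕ) ^ (Nat.log 2 k) ≤ k := Nat.pow_log_le_self 2 (by omega)
    have : Real.log ((2:ℕ) ^ (Nat.log 2 k) : ℕ) ≤ Real.log k := by
      apply Real.log_le_log (by positivity)
      exact_mod_cast hpow
    rwa [Nat.cast_pow, Real.log_pow, Nat.cast_ofNat] at this
  have hlog2 : (2:ℝ)/3 ≤ Real.log 2 := by
    have := Real.log_two_gt_d9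
    linarith
  have h2 : (Nat.log 2 k : ℝ) ≤ (3/2) * Real.log k := by
    have hl2 : (0:ℝ) < Real.log 2 := by linarith
    have hlk : (0:ℝ) ≤ Real.log k := Real.log_natCast_nonneg k
    nlinarith [Int.ofNat_nonneg (Nat.log 2 k)]
  have h3 : Real.log k ≤ 2 * (Real.sqrt k - 1) := by
    have : Real.log (Real.sqrt k) ≤ Real.sqrt k - 1 := Real.log_le_sub_one_of_pos hsk
    have hls : Real.log (Real.sqrt k) = Real.log k / 2 := Real.log_sqrt (le_of_lt hk0)
    linarith
  linarith

lemma key {d : ℤ} (hd : d < 0) (h4 : d % 4 = 0 ∨ d % 4 = 1) :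
    |Lchi d| ≤ 123 * Real.log d.natAbs := by
  have hq3 : 3 ≤ d.natAbs := q_ge_three hd h4
  set q := d.natAbs with hq
  have hb : jacobiSym d (8 * q - 1) = -1 := jac_b hd hq3
  set K : ℝ := 24 * q with hK
  have hK0 : (0:ℝ) ≤ K := by positivity
  set A : ℕ → ℝ := fun N => ∑ n ∈ Finset.Icc 1 N, (jacobiSym d n : ℝ) / n with hA
  -- A N as a sum over Ioc 0 N of g/n
  have hAeq : ∀ N, A N = ∑ n ∈ Ioc 0 N, g d n / n := by
    intro N
    simp only [hA]
    have : Finset.Icc 1 N = Finset.Ioc 0 N := by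
      ext n
      simp only [Finset.mem_Icc, Finset.mem_Ioc]
      omega
    rw [this]
    refine Finset.sum_congr rfl (fun n hn => ?_)
    simp only [Finset.mem_Ioc] at hn
    rw [g, if_neg (by omega)]
  -- the partial sums bound
  have hσ : ∀ k : ℕ, |∑ i ∈ range (k + 1), g d i| ≤ K * Real.sqrt k := by
    intro k
    rw [sum_g]
    rcases Nat.eq_zero_or_pos k with rfl | hk
    · simp
    · have hcast : ∑ n ∈ Ioc 0 k, (jacobiSym d n : ℝ) = ((∑ n ∈ Ioc 0 k, jacobiSym d n : ℤ) : ℝ) := by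
        push_cast
        rfl
      rw [hcast, ← Int.cast_abs]
      have h1 : ((|∑ n ∈ Ioc 0 k, jacobiSym d n| : ℤ) : ℝ)
          ≤ ((8 * q : ℤ) * (1 + (Nat.log 2 k : ℤ)) : ℤ) := by
        exact_mod_cast S_bound hd h4 hq hq3 hb k
      have h2 : (((8 * q : ℤ) * (1 + (Nat.log 2 k : ℤ)) : ℤ) : ℝ)
          = (8 * q) * (1 + (Nat.log 2 k : ℝ)) := by push_cast; ring
      rw [h2] at h1
      calc ((|∑ n ∈ Ioc 0 k, jacobiSym d n| : ℤ) : ℝ)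
          ≤ (8 * q) * (1 + (Nat.log 2 k : ℝ)) := h1
        _ ≤ (8 * q) * (3 * Real.sqrt k) := by
            have := log_nat_le k hk
            gcongr
        _ = K * Real.sqrt k := by rw [hK]; ring
  -- Cauchy estimates
  have habel : ∀ M N : ℕ, 1 ≤ M → M ≤ N → |A N - A M| ≤ 5 * K / Real.sqrt M := by
    intro M N h1 h2
    rw [hAeq, hAeq]
    exact abel_bound (g d) K hK0 hσ h1 h2
  -- Cauchy sequence
  have hcauchy : CauchySeq A := by
    rw [← cauchySeq_shift 1]
    apply cauchySeq_of_le_tendsto_0' (fun n : ℕ => 5 * K / Real.sqrt (n + 1))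
    · intro n m hnm
      rw [Real.dist_eq, abs_sub_comm]
      have := habel (n + 1) (m + 1) (by omega) (by omega)
      calc |A (m + 1) - A (n + 1)| ≤ 5 * K / Real.sqrt ((n + 1 : ℕ)) := this
        _ = 5 * K / Real.sqrt ((n : ℝ) + 1) := by norm_num
    · apply Filter.Tendsto.div_atTop tendsto_const_nhds
      apply tendsto_sqrt_atTop.comp
      apply Filter.tendsto_atTop_add_const_right
      exact tendsto_natCast_atTop_atTop
  obtain ⟨l, hl⟩ := cauchySeq_tendsto_of_complete hcauchy
  have hLl : Lchi d = l := by
    have : Tendsto (fun N : ℕ => ∑ n ∈ Finset.Icc 1 N, (jacobiSym d n : ℝ) / n) atTop (𝓝 l) := hl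
    exact this.limUnder_eq
  -- bound |A (q*q)|
  have hq0 : (0:ℝ) < q := by
    have : (1:ℕ) ≤ q := by omega
    exact_mod_cast this
  have hAq : |A (q * q)| ≤ 1 + 2 * Real.log q := by
    rw [hA]
    calc |∑ n ∈ Finset.Icc 1 (q * q), (jacobiSym d n : ℝ) / n|
        ≤ ∑ n ∈ Finset.Icc 1 (q * q), |(jacobiSym d n : ℝ) / n| := Finset.abs_sum_le_sum_abs _ _
      _ ≤ ∑ n ∈ Finset.Icc 1 (q * q), ((n : ℝ))⁻¹ := by
          refine Finset.sum_le_sum (fun n hn => ?_)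
          simp only [Finset.mem_Icc] at hn
          have hn0 : (0:ℝ) < n := by exact_mod_cast hn.1
          rw [abs_div, Nat.abs_cast, div_le_iff₀ hn0, inv_mul_cancel₀ (ne_of_gt hn0)]
          have : |(jacobiSym d n : ℝ)| = ((|jacobiSym d n| : ℤ) : ℝ) := by push_cast; rfl
          rw [this]
          have : |jacobiSym d n| ≤ 1 := by
            rcases jacobiSym.trichotomy d n with h | h | h <;> rw [h] <;> norm_num
          exact_mod_cast this
      _ = ((harmonic (q * q) : ℚ) : ℝ) := by
          rw [harmonic_eq_sum_Icc]
          push_cast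
          rfl
      _ ≤ 1 + Real.log ((q * q : ℕ)) := harmonic_le_one_add_log _
      _ = 1 + 2 * Real.log q := by
          rw [Nat.cast_mul, Real.log_mul (ne_of_gt hq0) (ne_of_gt hq0)]
          ring
  -- pass to the limit
  have hsqq : Real.sqrt ((q * q : ℕ)) = (q : ℝ) := by
    rw [Nat.cast_mul, show ((q:ℝ) * q) = (q:ℝ)^2 by ring, Real.sqrt_sq (le_of_lt hq0)]
  have hfinal : ∀ N, q * q ≤ N → |A N| ≤ 1 + 2 * Real.log q + 120 := by
    intro N hN
    have h1 : |A N - A (q * q)| ≤ 5 * K / Real.sqrt ((q * q : ℕ)) :=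
      habel (q * q) N (by nlinarith) hN
    rw [hsqq] at h1
    have h2 : 5 * K / (q : ℝ) = 120 := by
      rw [hK]
      field_simp
      ring
    rw [h2] at h1
    calc |A N| = |A (q * q) + (A N - A (q * q))| := by ring_nf
      _ ≤ |A (q * q)| + |A N - A (q * q)| := abs_add_le _ _
      _ ≤ 1 + 2 * Real.log q + 120 := by linarith
  have hlabs : |l| ≤ 1 + 2 * Real.log q + 120 := by
    apply le_of_tendsto hl.abs
    filter_upwards [Filter.eventually_ge_atTop (q * q)] with N hN
    exact hfinal N hN
  have hlogq : 1 ≤ Real.log q := by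
    rw [Real.le_log_iff_exp_le hq0]
    have h1 := Real.exp_one_lt_d9
    have h3 : (3:ℝ) ≤ q := by exact_mod_cast hq3
    linarith
  rw [hLl]
  calc |l| ≤ 1 + 2 * Real.log q + 120 := hlabs
    _ ≤ 123 * Real.log q := by nlinarith
    _ = 123 * Real.log d.natAbs := by rw [hq]



end KHproof

theorem KH_pointwise_bound :
    ∃ C : ℝ, 0 < C ∧ ∀ p : ℕ, p.Prime → ∀ r : ℤ, 0 < r → (r : ℝ) < 2 * Real.sqrt p →
      KH (r ^ 2 - 4 * (p : ℤ)) ≤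
        C * Real.sqrt (4 * p - (r : ℝ) ^ 2) * Real.log (4 * p) ^ 2 := by
  refine ⟨200, by norm_num, ?_⟩
  intro p hp r hr hrs
  set D : ℤ := r ^ 2 - 4 * (p : ℤ) with hD
  have hp2 : 2 ≤ p := hp.two_le
  have hppos : (0:ℝ) < p := by
    have h2 : (2:ℝ) ≤ (p:ℝ) := by exact_mod_cast hp2
    linarith
  have hrpos : (0:ℝ) < (r:ℝ) := by exact_mod_cast hr
  have hr2R : (r:ℝ)^2 < 4 * p := by
    nlinarith [Real.sq_sqrt (le_of_lt hppos), Real.sqrt_nonneg (p:ℝ)]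
  have hr2 : r^2 < 4*(p:ℤ) := by exact_mod_cast hr2R
  have hDneg : D < 0 := by rw [hD]; omega
  have hrr : (1:ℤ) ≤ r^2 := by nlinarith
  have hDval : (D.natAbs : ℤ) = 4*(p:ℤ) - r^2 := by
    have h0 : (D.natAbs : ℤ) = -D := by omega
    rw [h0, hD]; ring
  have hDleZ : (D.natAbs : ℤ) ≤ 4*(p:ℤ) := by omega
  have hDpos1 : 1 ≤ D.natAbs := by omega
  have hcast : ((D.natAbs : ℕ) : ℝ) = 4*(p:ℝ) - (r:ℝ)^2 := by
    have h0 : ((D.natAbs : ℕ) : ℝ) = ((D.natAbs : ℤ) : ℝ) := (Int.cast_natCast D.natAbs).symm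
    rw [h0, hDval]
    push_cast
    ring
  have hlog4p : (1:ℝ) ≤ Real.log (4*p) := by
    rw [Real.le_log_iff_exp_le (by positivity)]
    have h1 := Real.exp_one_lt_d9
    have h2 : (8:ℝ) ≤ 4*p := by
      have : (2:ℝ) ≤ p := by exact_mod_cast hp2
      linarith
    linarith
  have hDn4p : ((D.natAbs : ℕ) : ℝ) ≤ 4*(p:ℝ) := by exact_mod_cast hDleZ
  set B : ℝ := Real.sqrt D.natAbs * (123 * Real.log (4*p)) with hB
  have hB0 : 0 ≤ B := by
    rw [hB]
    apply mul_nonneg (Real.sqrt_nonneg _)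
    nlinarith
  have hterm : ∀ f ∈ Finset.Icc 1 D.natAbs,
      (if (f : ℤ) ^ 2 ∣ D ∧ (D / (f : ℤ) ^ 2 % 4 = 0 ∨ D / (f : ℤ) ^ 2 % 4 = 1) then
        Real.sqrt (D / (f : ℤ) ^ 2).natAbs * Lchi (D / (f : ℤ) ^ 2)
      else 0) ≤ B * ((f:ℝ))⁻¹ := by
    intro f hf
    simp only [Finset.mem_Icc] at hf
    have hf1 : 1 ≤ f := hf.1
    have hfR : (0:ℝ) < (f:ℝ) := by exact_mod_cast hf1
    split_ifs with hcond
    · obtain ⟨hdvd, hmod⟩ := hcond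
      set e : ℤ := D / (f:ℤ)^2 with he
      have hfe : e * (f:ℤ)^2 = D := Int.ediv_mul_cancel hdvd
      have hfsq : (0:ℤ) < (f:ℤ)^2 := by positivity
      have heneg : e < 0 := by nlinarith
      have hq3e : 3 ≤ e.natAbs := KHproof.q_ge_three heneg hmod
      have hLe : |Lchi e| ≤ 123 * Real.log e.natAbs := KHproof.key heneg hmod
      have hna : e.natAbs * (f^2) = D.natAbs := by
        have h1 := congrArg Int.natAbs hfe
        rwa [Int.natAbs_mul, Int.natAbs_pow, Int.natAbs_natCast] at h1
      have hsqrt : Real.sqrt e.natAbs = Real.sqrt D.natAbs / f := by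
        rw [eq_div_iff (ne_of_gt hfR)]
        have h2 : (f:ℝ) = Real.sqrt (((f:ℝ))^2) := (Real.sqrt_sq (le_of_lt hfR)).symm
        rw [h2, ← Real.sqrt_mul (by positivity)]
        congr 1
        push_cast [← hna]
        ring
      have hena : (e.natAbs : ℝ) ≤ 4*(p:ℝ) := by
        have h3 : e.natAbs ≤ D.natAbs := by
          calc e.natAbs ≤ e.natAbs * f^2 := Nat.le_mul_of_pos_right _ (by positivity)
            _ = D.natAbs := hna
        calc (e.natAbs : ℝ) ≤ (D.natAbs : ℝ) := by exact_mod_cast h3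
          _ ≤ 4*(p:ℝ) := hDn4p
      have hloge : Real.log e.natAbs ≤ Real.log (4*p) := by
        apply Real.log_le_log (by positivity : (0:ℝ) < (e.natAbs:ℝ)) hena
      have hloge0 : 0 ≤ Real.log (e.natAbs : ℝ) := Real.log_natCast_nonneg _
      calc Real.sqrt e.natAbs * Lchi e ≤ Real.sqrt e.natAbs * |Lchi e| := by
            apply mul_le_mul_of_nonneg_left (le_abs_self _) (Real.sqrt_nonneg _)
        _ ≤ Real.sqrt e.natAbs * (123 * Real.log e.natAbs) :=
            mul_le_mul_of_nonneg_left hLe (Real.sqrt_nonneg _)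
        _ ≤ Real.sqrt e.natAbs * (123 * Real.log (4*p)) := by
            have h9 : 123 * Real.log (e.natAbs : ℝ) ≤ 123 * Real.log (4*p) := by linarith
            exact mul_le_mul_of_nonneg_left h9 (Real.sqrt_nonneg _)
        _ = B * ((f:ℝ))⁻¹ := by
            rw [hsqrt, hB]
            field_simp
    · positivity
  -- sum the bounds
  have hsum : ∑ f ∈ Finset.Icc 1 D.natAbs,
      (if (f : ℤ) ^ 2 ∣ D ∧ (D / (f : ℤ) ^ 2 % 4 = 0 ∨ D / (f : ℤ) ^ 2 % 4 = 1) then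
        Real.sqrt (D / (f : ℤ) ^ 2).natAbs * Lchi (D / (f : ℤ) ^ 2)
      else 0) ≤ B * (1 + Real.log D.natAbs) := by
    calc ∑ f ∈ Finset.Icc 1 D.natAbs,
        (if (f : ℤ) ^ 2 ∣ D ∧ (D / (f : ℤ) ^ 2 % 4 = 0 ∨ D / (f : ℤ) ^ 2 % 4 = 1) then
          Real.sqrt (D / (f : ℤ) ^ 2).natAbs * Lchi (D / (f : ℤ) ^ 2)
        else 0)
        ≤ ∑ f ∈ Finset.Icc 1 D.natAbs, B * ((f:ℝ))⁻¹ := Finset.sum_le_sum hterm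
      _ = B * ∑ f ∈ Finset.Icc 1 D.natAbs, ((f:ℝ))⁻¹ := by rw [Finset.mul_sum]
      _ = B * ((harmonic D.natAbs : ℚ) : ℝ) := by
          rw [harmonic_eq_sum_Icc]
          push_cast
          rfl
      _ ≤ B * (1 + Real.log D.natAbs) := by
          apply mul_le_mul_of_nonneg_left (harmonic_le_one_add_log _) hB0
  have hlogD : Real.log (D.natAbs : ℝ) ≤ Real.log (4*p) := by
    apply Real.log_le_log (by exact_mod_cast hDpos1 : (0:ℝ) < (D.natAbs:ℝ)) hDn4p
  have hpiA : (1:ℝ)/Real.pi ≤ 1/3 := by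
    have h1 := Real.pi_gt_three
    rw [div_le_div_iff₀ Real.pi_pos (by norm_num)]
    linarith
  have hpi0 : (0:ℝ) ≤ 1/Real.pi := by positivity
  have hX0 : (0:ℝ) ≤ Real.sqrt (4*(p:ℝ) - (r:ℝ)^2) * Real.log (4*p) ^ 2 := by positivity
  have hsqD : Real.sqrt (D.natAbs : ℝ) = Real.sqrt (4*(p:ℝ) - (r:ℝ)^2) := by rw [hcast]
  calc KH D = (1 / Real.pi) * ∑ f ∈ Finset.Icc 1 D.natAbs,
        (if (f : ℤ) ^ 2 ∣ D ∧ (D / (f : ℤ) ^ 2 % 4 = 0 ∨ D / (f : ℤ) ^ 2 % 4 = 1) then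
          Real.sqrt (D / (f : ℤ) ^ 2).natAbs * Lchi (D / (f : ℤ) ^ 2)
        else 0) := rfl
    _ ≤ (1 / Real.pi) * (B * (1 + Real.log D.natAbs)) :=
        mul_le_mul_of_nonneg_left hsum hpi0
    _ ≤ (1 / 3) * (B * (2 * Real.log (4*p))) := by
        have hBn : 0 ≤ B * (1 + Real.log D.natAbs) := by
          apply mul_nonneg hB0
          have := Real.log_natCast_nonneg D.natAbs
          linarith
        have h2 : B * (1 + Real.log D.natAbs) ≤ B * (2 * Real.log (4*p)) := by
          apply mul_le_mul_of_nonneg_left _ hB0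
          linarith
        calc (1 / Real.pi) * (B * (1 + Real.log D.natAbs))
            ≤ (1/3) * (B * (1 + Real.log D.natAbs)) :=
              mul_le_mul_of_nonneg_right hpiA hBn
          _ ≤ (1/3) * (B * (2 * Real.log (4*p))) := by linarith
    _ = 82 * (Real.sqrt (4*(p:ℝ) - (r:ℝ)^2) * Real.log (4*p) ^ 2) := by
        rw [hB, hsqD]
        ring
    _ ≤ 200 * Real.sqrt (4 * (p:ℝ) - (r : ℝ) ^ 2) * Real.log (4 * p) ^ 2 := by
        nlinarith [hX0]
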